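/- arXiv:1011.4103 — 3 statements merged into one kernel-verified Lean document; each statement's English description precedes it below -/
import Mathlib

section
/- For every polynomial D in Z[x_1,...,x_p] there exist n ≥ p and a finite system S of equations, each of one of the forms x_i = 1, x_i + x_j = x_k, or x_i · x_j = x_k with i, j, k in {1,...,n}, such that for every commutative ring K extending Z and all x_1,...,x_p in K: D(x_1,...,x_p) = 0 if and only if there exist x_{p+1},...,x_n in K such that (x_1,...,x_n) solves S; moreover such x_{p+1},...,x_n, when they exist, are unique. -/
/-- An equation from the set `E_n`: `x_i = 1`, `x_i + x_j = x_k`, or `x_i * x_j = x_k`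
with indices in `{1, ..., n}` (here `Fin n`). -/
inductive Eqn (n : ℕ) where
  | one (i : Fin n)
  | add (i j k : Fin n)
  | mul (i j k : Fin n)

/-- The equation holds for an assignment `x` of values in a commutative semiring. -/
def Eqn.Holds {n : ℕ} {K : Type*} [CommSemiring K] (x : Fin n → K) : Eqn n → Prop
  | .one i => x i = 1
  | .add i j k => x i + x j = x k
  | .mul i j k => x i * x j = x k

def Eqn.castLE {m n : ℕ} (h : m ≤ n) : Eqn m → Eqn n
  | .one i => .one (Fin.castLE h i)
  | .add i j k => .add (Fin.castLE h i) (Fin.castLE h j) (Fin.castLE h k)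
  | .mul i j k => .mul (Fin.castLE h i) (Fin.castLE h j) (Fin.castLE h k)

theorem Eqn.holds_castLE {m n : ℕ} (h : m ≤ n) {K : Type*} [CommSemiring K]
    (y : Fin n → K) (e : Eqn m) :
    (e.castLE h).Holds y ↔ e.Holds (fun i => y (Fin.castLE h i)) := by
  cases e <;> rfl

/-- A single straight-line instruction introducing one new variable. -/
inductive Instr (m : ℕ) where
  | one
  | zero
  | add (i j : Fin m)
  | mul (i j : Fin m)
  | sub (i j : Fin m)

def Instr.val {m : ℕ} {K : Type*} [CommRing K] (x : Fin m → K) : Instr m → K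
  | .one => 1
  | .zero => 0
  | .add i j => x i + x j
  | .mul i j => x i * x j
  | .sub i j => x i - x j

def Instr.eqn {m : ℕ} : Instr m → Eqn (m + 1)
  | .one => .one (Fin.last m)
  | .zero => .add (Fin.last m) (Fin.last m) (Fin.last m)
  | .add i j => .add i.castSucc j.castSucc (Fin.last m)
  | .mul i j => .mul i.castSucc j.castSucc (Fin.last m)
  | .sub i j => .add (Fin.last m) j.castSucc i.castSucc

theorem Instr.holds_eqn {m : ℕ} {K : Type*} [CommRing K] (t : Instr m)
    (y : Fin (m + 1) → K) :
    t.eqn.Holds y ↔ y (Fin.last m) = t.val (fun i => y i.castSucc) := by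
  cases t with
  | one => rfl
  | zero =>
      show y (Fin.last m) + y (Fin.last m) = y (Fin.last m) ↔ y (Fin.last m) = 0
      exact add_eq_right
  | add i j =>
      show y i.castSucc + y j.castSucc = y (Fin.last m) ↔
        y (Fin.last m) = y i.castSucc + y j.castSucc
      exact eq_comm
  | mul i j =>
      show y i.castSucc * y j.castSucc = y (Fin.last m) ↔
        y (Fin.last m) = y i.castSucc * y j.castSucc
      exact eq_comm
  | sub i j =>
      show y (Fin.last m) + y j.castSucc = y i.castSucc ↔
        y (Fin.last m) = y i.castSucc - y j.castSucc
      exact eq_sub_iff_add_eq.symm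

/-- Straight-line programs from `a` variables to `b` variables. -/
inductive Prog : ℕ → ℕ → Type where
  | nil {a : ℕ} : Prog a a
  | snoc {a b : ℕ} : Prog a b → Instr b → Prog a (b + 1)

def Prog.le {a : ℕ} : ∀ {b : ℕ}, Prog a b → a ≤ b
  | _, .nil => le_rfl
  | _, .snoc P _ => P.le.trans (Nat.le_succ _)

def Prog.val {K : Type*} [CommRing K] {a : ℕ} (v : Fin a → K) :
    ∀ {b : ℕ}, Prog a b → Fin b → K
  | _, .nil => v
  | _, .snoc P t => Fin.snoc (P.val v) (t.val (P.val v))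

@[simp] theorem Prog.val_nil {K : Type*} [CommRing K] {a : ℕ} (v : Fin a → K) :
    Prog.nil.val v = v := rfl

@[simp] theorem Prog.val_snoc {K : Type*} [CommRing K] {a b : ℕ} (v : Fin a → K)
    (P : Prog a b) (t : Instr b) :
    (P.snoc t).val v = Fin.snoc (P.val v) (t.val (P.val v)) := rfl

def Prog.eqns {a : ℕ} : ∀ {b : ℕ}, Prog a b → List (Eqn b)
  | _, .nil => []
  | _, .snoc P t => (P.eqns.map (Eqn.castLE (Nat.le_succ _))) ++ [t.eqn]

@[simp] theorem Prog.eqns_nil {a : ℕ} : (Prog.nil : Prog a a).eqns = [] := rfl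

@[simp] theorem Prog.eqns_snoc {a b : ℕ} (P : Prog a b) (t : Instr b) :
    (P.snoc t).eqns = (P.eqns.map (Eqn.castLE (Nat.le_succ _))) ++ [t.eqn] := rfl

noncomputable def Prog.append {a b c : ℕ} (P : Prog a b) (Q : Prog b c) : Prog a c :=
  Prog.rec (motive := fun c' _ => Prog a c') P (fun _ t ih => ih.snoc t) Q

@[simp] theorem Prog.append_nil {a b : ℕ} (P : Prog a b) : P.append .nil = P := rfl

@[simp] theorem Prog.append_snoc {a b c : ℕ} (P : Prog a b) (Q : Prog b c) (t : Instr c) :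
    P.append (.snoc Q t) = .snoc (P.append Q) t := rfl

theorem Prog.append_val {K : Type*} [CommRing K] {a b : ℕ} (P : Prog a b)
    (v : Fin a → K) : ∀ {c : ℕ} (Q : Prog b c), (P.append Q).val v = Q.val (P.val v)
  | _, .nil => by rw [Prog.append_nil, Prog.val_nil]
  | _, .snoc Q t => by
      rw [Prog.append_snoc, Prog.val_snoc, Prog.val_snoc, Prog.append_val P v Q]

theorem Prog.val_castLE {K : Type*} [CommRing K] {a : ℕ} (v : Fin a → K) :
    ∀ {b : ℕ} (P : Prog a b) (h : a ≤ b) (i : Fin a), P.val v (Fin.castLE h i) = v i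
  | _, .nil, h, i => by
      rw [Prog.val_nil]
      exact congrArg v (Fin.val_injective rfl)
  | _, .snoc P t, h, i => by
      rw [Prog.val_snoc]
      have hc : Fin.castLE h i = (Fin.castLE P.le i).castSucc := rfl
      rw [hc, Fin.snoc_castSucc]
      exact Prog.val_castLE v P P.le i

theorem Prog.holds_iff {K : Type*} [CommRing K] {a : ℕ} (v : Fin a → K) :
    ∀ {b : ℕ} (P : Prog a b) (h : a ≤ b) (y : Fin b → K),
      (∀ i, y (Fin.castLE h i) = v i) →
      ((∀ e ∈ P.eqns, e.Holds y) ↔ y = P.val v)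
  | _, .nil, h, y, hy => by
      simp only [Prog.eqns_nil, List.not_mem_nil, false_implies, implies_true, true_iff,
        Prog.val_nil]
      funext i
      exact hy i
  | _, .snoc P t, h, y, hy => by
      have hab : _ ≤ _ := P.le
      set y' : Fin _ → K := fun i => y i.castSucc with hy'
      have hy'' : ∀ i, y' (Fin.castLE hab i) = v i := by
        intro i
        have hc : (Fin.castLE hab i).castSucc = Fin.castLE h i := rfl
        simp only [hy', hc, hy]
      have IH := Prog.holds_iff v P hab y' hy''
      rw [Prog.val_snoc]
      constructor
      · intro hall
        have h1 : ∀ e ∈ P.eqns, e.Holds y' := by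
          intro e he
          have := hall (e.castLE (Nat.le_succ _)) (by
            rw [Prog.eqns_snoc]
            simp only [List.mem_append, List.mem_map, List.mem_singleton]
            exact Or.inl ⟨e, he, rfl⟩)
          rwa [Eqn.holds_castLE] at this
        have h2 : y (Fin.last _) = t.val y' := by
          have := hall t.eqn (by rw [Prog.eqns_snoc]; simp)
          rwa [Instr.holds_eqn] at this
        have h3 : y' = P.val v := IH.mp h1
        funext i
        refine Fin.lastCases ?_ ?_ i
        · rw [Fin.snoc_last, ← h3, h2]
        · intro j
          rw [Fin.snoc_castSucc, ← h3]
      · intro heq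
        intro e he
        rw [Prog.eqns_snoc] at he
        simp only [List.mem_append, List.mem_map, List.mem_singleton] at he
        have h3 : y' = P.val v := by
          funext i
          simp only [hy', heq, Fin.snoc_castSucc]
        rcases he with ⟨e', he', rfl⟩ | rfl
        · rw [Eqn.holds_castLE]
          exact (IH.mpr h3) e' he'
        · rw [Instr.holds_eqn, ← hy', h3, heq, Fin.snoc_last]

/-- Ring expressions over `p` variables. -/
inductive Expr (p : ℕ) where
  | X (i : Fin p)
  | one
  | zero
  | add (a b : Expr p)
  | mul (a b : Expr p)
  | sub (a b : Expr p)

def Expr.eval {p : ℕ} {K : Type*} [CommRing K] (x : Fin p → K) : Expr p → K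
  | .X i => x i
  | .one => 1
  | .zero => 0
  | .add a b => a.eval x + b.eval x
  | .mul a b => a.eval x * b.eval x
  | .sub a b => a.eval x - b.eval x

def natExpr (p : ℕ) : ℕ → Expr p
  | 0 => .zero
  | n + 1 => .add (natExpr p n) .one

theorem natExpr_eval {p : ℕ} {K : Type*} [CommRing K] (x : Fin p → K) (n : ℕ) :
    (natExpr p n).eval x = (n : K) := by
  induction n with
  | zero => simp [natExpr, Expr.eval]
  | succ n ih => simp [natExpr, Expr.eval, ih]

def intExpr (p : ℕ) : ℤ → Expr p
  | Int.ofNat n => natExpr p n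
  | Int.negSucc n => .sub .zero (natExpr p (n + 1))

theorem intExpr_eval {p : ℕ} {K : Type*} [CommRing K] (x : Fin p → K) (c : ℤ) :
    (intExpr p c).eval x = (c : K) := by
  cases c with
  | ofNat n => simp [intExpr, natExpr_eval]
  | negSucc n => simp [intExpr, Expr.eval, natExpr_eval]

theorem exists_expr {p : ℕ} (D : MvPolynomial (Fin p) ℤ) :
    ∃ E : Expr p, ∀ (K : Type) [CommRing K] (x : Fin p → K),
      E.eval x = MvPolynomial.aeval x D := by
  induction D using MvPolynomial.induction_on with
  | C c =>
      exact ⟨intExpr p c, fun K _ x => by simp [intExpr_eval]⟩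
  | add q r hq hr =>
      obtain ⟨Eq, hEq⟩ := hq
      obtain ⟨Er, hEr⟩ := hr
      exact ⟨.add Eq Er, fun K _ x => by simp [Expr.eval, hEq, hEr]⟩
  | mul_X q i hq =>
      obtain ⟨Eq, hEq⟩ := hq
      exact ⟨.mul Eq (.X i), fun K _ x => by simp [Expr.eval, hEq]⟩

/-- The result of compiling an expression into a straight-line program. -/
structure Compiled (p n : ℕ) (hp : p ≤ n) (E : Expr p) where
  m : ℕ
  hm : n ≤ m
  P : Prog n m
  idx : Fin m
  spec : ∀ (K : Type) [CommRing K] (v : Fin n → K),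
    P.val v idx = E.eval (fun i => v (Fin.castLE hp i))

noncomputable def compile {p : ℕ} : (E : Expr p) → ∀ (n : ℕ) (hp : p ≤ n), Compiled p n hp E
  | .X i, n, hp =>
      ⟨n, le_rfl, .nil, Fin.castLE hp i, fun K _ v => rfl⟩
  | .one, n, hp =>
      ⟨n + 1, Nat.le_succ n, .snoc .nil .one, Fin.last n, fun K _ v => by
        rw [Prog.val_snoc, Fin.snoc_last]; rfl⟩
  | .zero, n, hp =>
      ⟨n + 1, Nat.le_succ n, .snoc .nil .zero, Fin.last n, fun K _ v => by
        rw [Prog.val_snoc, Fin.snoc_last]; rfl⟩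
  | .add a b, n, hp =>
      let Ca := compile a n hp
      let Cb := compile b Ca.m (hp.trans Ca.hm)
      ⟨Cb.m + 1, (Ca.hm.trans Cb.hm).trans (Nat.le_succ _),
        .snoc (Ca.P.append Cb.P) (.add (Fin.castLE Cb.hm Ca.idx) Cb.idx),
        Fin.last _, fun K _ v => by
          rw [Prog.val_snoc, Fin.snoc_last, Prog.append_val]
          show Cb.P.val (Ca.P.val v) (Fin.castLE Cb.hm Ca.idx)
              + Cb.P.val (Ca.P.val v) Cb.idx
            = a.eval (fun i => v (Fin.castLE hp i)) + b.eval (fun i => v (Fin.castLE hp i))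
          rw [Prog.val_castLE (Ca.P.val v) Cb.P Cb.hm, Ca.spec K v, Cb.spec K (Ca.P.val v),
            show (fun i => Prog.val v Ca.P (Fin.castLE (hp.trans Ca.hm) i))
                = (fun i => v (Fin.castLE hp i)) from
              funext fun i => Prog.val_castLE v Ca.P Ca.hm (Fin.castLE hp i)]⟩
  | .mul a b, n, hp =>
      let Ca := compile a n hp
      let Cb := compile b Ca.m (hp.trans Ca.hm)
      ⟨Cb.m + 1, (Ca.hm.trans Cb.hm).trans (Nat.le_succ _),
        .snoc (Ca.P.append Cb.P) (.mul (Fin.castLE Cb.hm Ca.idx) Cb.idx),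
        Fin.last _, fun K _ v => by
          rw [Prog.val_snoc, Fin.snoc_last, Prog.append_val]
          show Cb.P.val (Ca.P.val v) (Fin.castLE Cb.hm Ca.idx)
              * Cb.P.val (Ca.P.val v) Cb.idx
            = a.eval (fun i => v (Fin.castLE hp i)) * b.eval (fun i => v (Fin.castLE hp i))
          rw [Prog.val_castLE (Ca.P.val v) Cb.P Cb.hm, Ca.spec K v, Cb.spec K (Ca.P.val v),
            show (fun i => Prog.val v Ca.P (Fin.castLE (hp.trans Ca.hm) i))
                = (fun i => v (Fin.castLE hp i)) from
              funext fun i => Prog.val_castLE v Ca.P Ca.hm (Fin.castLE hp i)]⟩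
  | .sub a b, n, hp =>
      let Ca := compile a n hp
      let Cb := compile b Ca.m (hp.trans Ca.hm)
      ⟨Cb.m + 1, (Ca.hm.trans Cb.hm).trans (Nat.le_succ _),
        .snoc (Ca.P.append Cb.P) (.sub (Fin.castLE Cb.hm Ca.idx) Cb.idx),
        Fin.last _, fun K _ v => by
          rw [Prog.val_snoc, Fin.snoc_last, Prog.append_val]
          show Cb.P.val (Ca.P.val v) (Fin.castLE Cb.hm Ca.idx)
              - Cb.P.val (Ca.P.val v) Cb.idx
            = a.eval (fun i => v (Fin.castLE hp i)) - b.eval (fun i => v (Fin.castLE hp i))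
          rw [Prog.val_castLE (Ca.P.val v) Cb.P Cb.hm, Ca.spec K v, Cb.spec K (Ca.P.val v),
            show (fun i => Prog.val v Ca.P (Fin.castLE (hp.trans Ca.hm) i))
                = (fun i => v (Fin.castLE hp i)) from
              funext fun i => Prog.val_castLE v Ca.P Ca.hm (Fin.castLE hp i)]⟩

theorem stmt_8 (p : ℕ) (D : MvPolynomial (Fin p) ℤ) :
    ∃ (n : ℕ) (hpn : p ≤ n) (S : List (Eqn n)),
      ∀ (K : Type) [CommRing K] [CharZero K] (x : Fin p → K),
        (MvPolynomial.aeval x D = 0 ↔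
          ∃ y : Fin n → K, (∀ i : Fin p, y (Fin.castLE hpn i) = x i) ∧
            ∀ e ∈ S, e.Holds y) ∧
        ∀ y z : Fin n → K,
          ((∀ i : Fin p, y (Fin.castLE hpn i) = x i) ∧ ∀ e ∈ S, e.Holds y) →
          ((∀ i : Fin p, z (Fin.castLE hpn i) = x i) ∧ ∀ e ∈ S, e.Holds z) →
          y = z := by
  obtain ⟨E, hE⟩ := exists_expr D
  let C := compile E p le_rfl
  refine ⟨C.m, C.hm, C.P.eqns ++ [Eqn.add C.idx C.idx C.idx], ?_⟩
  intro K _ _ x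
  have hxid : (fun i => x (Fin.castLE (le_refl p) i)) = x := rfl
  have hval : ∀ y : Fin C.m → K, y = C.P.val x → y C.idx = MvPolynomial.aeval x D := by
    intro y hy
    rw [hy, C.spec K x, hxid, hE K x]
  have key : ∀ y : Fin C.m → K,
      ((∀ i : Fin p, y (Fin.castLE C.hm i) = x i) ∧
        ∀ e ∈ C.P.eqns ++ [Eqn.add C.idx C.idx C.idx], e.Holds y) ↔
      (y = C.P.val x ∧ MvPolynomial.aeval x D = 0) := by
    intro y
    constructor
    · rintro ⟨hcast, hall⟩
      have h1 : ∀ e ∈ C.P.eqns, e.Holds y := fun e he => hall e (by simp [he])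
      have h2 : y C.idx + y C.idx = y C.idx :=
        hall (Eqn.add C.idx C.idx C.idx) (by simp)
      have hyv : y = C.P.val x := (C.P.holds_iff x C.hm y hcast).mp h1
      refine ⟨hyv, ?_⟩
      rw [← hval y hyv]
      exact add_eq_right.mp h2
    · rintro ⟨rfl, hD⟩
      have hcast : ∀ i : Fin p, C.P.val x (Fin.castLE C.hm i) = x i :=
        fun i => Prog.val_castLE x C.P C.hm i
      refine ⟨hcast, ?_⟩
      intro e he
      simp only [List.mem_append, List.mem_singleton] at he
      rcases he with he | rfl
      · exact ((C.P.holds_iff x C.hm _ hcast).mpr rfl) e he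
      · show C.P.val x C.idx + C.P.val x C.idx = C.P.val x C.idx
        rw [hval _ rfl, hD, add_zero]
  constructor
  · constructor
    · intro hD
      exact ⟨C.P.val x, (key _).mpr ⟨rfl, hD⟩⟩
    · rintro ⟨y, hy⟩
      exact ((key y).mp hy).2
  · intro y z hy hz
    rw [((key y).mp hy).1, ((key z).mp hz).1]
end

section
/- For every polynomial D in Z[x_1,...,x_p] and every commutative ring K extending Z, the equation D(x_1,...,x_p) = 0 has the same number of solutions in K^p as some explicitly constructed system S ⊆ E_n has solutions in K^n (the projection onto the first p coordinates is a bijection between solution sets). -/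
namespace Stmt9

open MvPolynomial

/-- Equations with ℕ indices, to avoid `Fin` casts while building. -/
inductive NEqn where
  | one (i : ℕ)
  | add (i j k : ℕ)
  | mul (i j k : ℕ)

def NEqn.Holds {K : Type*} [CommSemiring K] (x : ℕ → K) : NEqn → Prop
  | .one i => x i = 1
  | .add i j k => x i + x j = x k
  | .mul i j k => x i * x j = x k

def NEqn.Bound (n : ℕ) : NEqn → Prop
  | .one i => i < n
  | .add i j k => i < n ∧ j < n ∧ k < n
  | .mul i j k => i < n ∧ j < n ∧ k < n

lemma NEqn.Bound.mono {n m : ℕ} (h : n ≤ m) : ∀ {e : NEqn}, e.Bound n → e.Bound m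
  | .one _, hb => lt_of_lt_of_le hb h
  | .add _ _ _, hb => ⟨lt_of_lt_of_le hb.1 h, lt_of_lt_of_le hb.2.1 h, lt_of_lt_of_le hb.2.2 h⟩
  | .mul _ _ _, hb => ⟨lt_of_lt_of_le hb.1 h, lt_of_lt_of_le hb.2.1 h, lt_of_lt_of_le hb.2.2 h⟩

def NEqn.toEqn (n : ℕ) : (e : NEqn) → e.Bound n → Eqn n
  | .one i, h => .one ⟨i, h⟩
  | .add i j k, h => .add ⟨i, h.1⟩ ⟨j, h.2.1⟩ ⟨k, h.2.2⟩
  | .mul i j k, h => .mul ⟨i, h.1⟩ ⟨j, h.2.1⟩ ⟨k, h.2.2⟩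

lemma NEqn.holds_congr {K : Type*} [CommSemiring K] {n : ℕ} {y₁ y₂ : ℕ → K}
    (h : ∀ i < n, y₁ i = y₂ i) : ∀ {e : NEqn}, e.Bound n → (e.Holds y₁ ↔ e.Holds y₂)
  | .one i, hb => by simp [NEqn.Holds, h i hb]
  | .add i j k, hb => by simp [NEqn.Holds, h i hb.1, h j hb.2.1, h k hb.2.2]
  | .mul i j k, hb => by simp [NEqn.Holds, h i hb.1, h j hb.2.1, h k hb.2.2]

lemma NEqn.toEqn_holds {K : Type*} [CommSemiring K] {n : ℕ} (y : Fin n → K)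
    {e : NEqn} (hb : e.Bound n) :
    (e.toEqn n hb).Holds y ↔ e.Holds (fun i => if h : i < n then y ⟨i, h⟩ else 0) := by
  cases e with
  | one i =>
      simp only [NEqn.toEqn, Eqn.Holds, NEqn.Holds]
      rw [dif_pos (show i < n from hb)]
  | add i j k =>
      simp only [NEqn.toEqn, Eqn.Holds, NEqn.Holds]
      rw [dif_pos (show i < n from hb.1), dif_pos (show j < n from hb.2.1),
        dif_pos (show k < n from hb.2.2)]
  | mul i j k =>
      simp only [NEqn.toEqn, Eqn.Holds, NEqn.Holds]
      rw [dif_pos (show i < n from hb.1), dif_pos (show j < n from hb.2.1),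
        dif_pos (show k < n from hb.2.2)]

/-- Expression trees. -/
inductive Expr (p : ℕ) where
  | X (i : Fin p)
  | one
  | add (a b : Expr p)
  | mul (a b : Expr p)
  | neg (a : Expr p)

noncomputable def Expr.toPoly {p : ℕ} : Expr p → MvPolynomial (Fin p) ℤ
  | .X i => MvPolynomial.X i
  | .one => 1
  | .add a b => a.toPoly + b.toPoly
  | .mul a b => a.toPoly * b.toPoly
  | .neg a => -a.toPoly

lemma Expr.exists_toPoly_eq {p : ℕ} (D : MvPolynomial (Fin p) ℤ) :
    ∃ e : Expr p, e.toPoly = D := by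
  induction D using MvPolynomial.induction_on with
  | C a =>
      induction a using Int.induction_on with
      | zero => exact ⟨.add .one (.neg .one), by simp [Expr.toPoly]⟩
      | succ k ih =>
          obtain ⟨e, he⟩ := ih
          exact ⟨.add .one e, by simp [Expr.toPoly, he, map_add]; ring⟩
      | pred k ih =>
          obtain ⟨e, he⟩ := ih
          exact ⟨.add (.neg .one) e, by simp [Expr.toPoly, he, map_sub, map_add, map_neg]; ring⟩
  | add f g hf hg =>
      obtain ⟨e₁, h₁⟩ := hf; obtain ⟨e₂, h₂⟩ := hg
      exact ⟨.add e₁ e₂, by simp [Expr.toPoly, h₁, h₂]⟩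
  | mul_X f i hf =>
      obtain ⟨e, he⟩ := hf
      exact ⟨.mul e (.X i), by simp [Expr.toPoly, he]⟩

/-- The state of the compiler: number of variables, equations, and the intended value of
each variable as a polynomial in the inputs. -/
structure St (p : ℕ) where
  n : ℕ
  eqs : List NEqn
  val : ℕ → MvPolynomial (Fin p) ℤ

def St.push {p : ℕ} (s : St p) (v : MvPolynomial (Fin p) ℤ) (es : List NEqn) : St p :=
  ⟨s.n + 1, es ++ s.eqs, Function.update s.val s.n v⟩

structure Inv {p : ℕ} (s : St p) : Prop where
  le : p ≤ s.n
  bound : ∀ eq ∈ s.eqs, NEqn.Bound s.n eq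
  valX : ∀ (i : ℕ) (h : i < p), s.val i = MvPolynomial.X ⟨i, h⟩
  sound : ∀ (K : Type) [CommRing K] (x : Fin p → K), ∀ eq ∈ s.eqs,
      NEqn.Holds (fun i => MvPolynomial.aeval x (s.val i)) eq
  det : ∀ (K : Type) [CommRing K] (y : ℕ → K), (∀ eq ∈ s.eqs, NEqn.Holds y eq) →
      ∀ i < s.n, y i = MvPolynomial.aeval (fun j : Fin p => y j) (s.val i)

structure Ext {p : ℕ} (s s' : St p) : Prop where
  le : s.n ≤ s'.n
  val : ∀ i < s.n, s'.val i = s.val i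
  mem : ∀ eq ∈ s.eqs, eq ∈ s'.eqs

lemma Ext.refl' {p : ℕ} (s : St p) : Ext s s := ⟨le_rfl, fun _ _ => rfl, fun _ h => h⟩

lemma Ext.trans {p : ℕ} {s₁ s₂ s₃ : St p} (h₁ : Ext s₁ s₂) (h₂ : Ext s₂ s₃) : Ext s₁ s₃ :=
  ⟨h₁.le.trans h₂.le, fun i hi => (h₂.val i (lt_of_lt_of_le hi h₁.le)).trans (h₁.val i hi),
   fun eq h => h₂.mem eq (h₁.mem eq h)⟩

noncomputable def compile {p : ℕ} : Expr p → St p → St p × ℕ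
  | .X i, s => (s, i)
  | .one, s => (s.push 1 [.one s.n], s.n)
  | .add a b, s =>
      let r₁ := compile a s
      let r₂ := compile b r₁.1
      (r₂.1.push (a.toPoly + b.toPoly) [.add r₁.2 r₂.2 r₂.1.n], r₂.1.n)
  | .mul a b, s =>
      let r₁ := compile a s
      let r₂ := compile b r₁.1
      (r₂.1.push (a.toPoly * b.toPoly) [.mul r₁.2 r₂.2 r₂.1.n], r₂.1.n)
  | .neg a, s =>
      let r₁ := compile a s
      let s₂ := r₁.1.push 0 [.add r₁.1.n r₁.1.n r₁.1.n]
      (s₂.push (-a.toPoly) [.add r₁.2 s₂.n r₁.1.n], s₂.n)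

lemma push_spec {p : ℕ} {s : St p} (hs : Inv s) (v : MvPolynomial (Fin p) ℤ)
    (es : List NEqn)
    (hb : ∀ eq ∈ es, NEqn.Bound (s.n + 1) eq)
    (hsound : ∀ (K : Type) [CommRing K] (x : Fin p → K), ∀ eq ∈ es,
        NEqn.Holds (fun i => MvPolynomial.aeval x (Function.update s.val s.n v i)) eq)
    (hdet : ∀ (K : Type) [CommRing K] (y : ℕ → K),
        (∀ eq ∈ s.eqs, NEqn.Holds y eq) → (∀ eq ∈ es, NEqn.Holds y eq) →
        (∀ i < s.n, y i = MvPolynomial.aeval (fun j : Fin p => y j) (s.val i)) →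
        y s.n = MvPolynomial.aeval (fun j : Fin p => y j) v) :
    Inv (s.push v es) ∧ Ext s (s.push v es) := by
  have hval : ∀ i < s.n, (s.push v es).val i = s.val i := by
    intro i hi
    exact Function.update_of_ne (Nat.ne_of_lt hi) _ _
  have hmem : ∀ eq ∈ s.eqs, eq ∈ (s.push v es).eqs := by
    intro eq h; exact List.mem_append_right _ h
  have hext : Ext s (s.push v es) := ⟨Nat.le_succ _, hval, hmem⟩
  refine ⟨⟨hs.le.trans (Nat.le_succ _), ?_, ?_, ?_, ?_⟩, hext⟩
  · intro eq h
    rcases List.mem_append.mp h with h | h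
    · exact hb eq h
    · exact (hs.bound eq h).mono (Nat.le_succ _)
  · intro i hi
    rw [hval i (lt_of_lt_of_le hi hs.le)]
    exact hs.valX i hi
  · intro K _ x eq h
    rcases List.mem_append.mp h with h | h
    · exact hsound K x eq h
    · refine (NEqn.holds_congr (n := s.n) ?_ (hs.bound eq h)).mpr (hs.sound K x eq h)
      intro i hi
      rw [hval i hi]
  · intro K _ y hy i hi
    have hyold : ∀ eq ∈ s.eqs, NEqn.Holds y eq := fun eq h => hy eq (hmem eq h)
    have hyes : ∀ eq ∈ es, NEqn.Holds y eq := fun eq h =>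
      hy eq (List.mem_append_left _ h)
    have hprev : ∀ i < s.n, y i = MvPolynomial.aeval (fun j : Fin p => y j) (s.val i) :=
      fun i hi => hs.det K y hyold i hi
    rcases Nat.lt_succ_iff_lt_or_eq.mp hi with hi | hi
    · rw [hval i hi]; exact hprev i hi
    · subst hi
      rw [show (s.push v es).val s.n = v from Function.update_self _ _ _]
      exact hdet K y hyold hyes hprev

lemma compile_spec {p : ℕ} : ∀ (e : Expr p) (s : St p), Inv s →
    Inv (compile e s).1 ∧ Ext s (compile e s).1 ∧ (compile e s).2 < (compile e s).1.n ∧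
      (compile e s).1.val (compile e s).2 = e.toPoly := by
  intro e
  induction e with
  | X i =>
      intro s hs
      refine ⟨hs, Ext.refl' s, lt_of_lt_of_le i.isLt hs.le, ?_⟩
      simpa [Expr.toPoly, compile] using hs.valX i i.isLt
  | one =>
      intro s hs
      have hb : ∀ eq ∈ [NEqn.one s.n], NEqn.Bound (s.n + 1) eq := by
        intro eq h; simp only [List.mem_singleton] at h; subst h
        exact Nat.lt_succ_self _
      have hsound : ∀ (K : Type) [CommRing K] (x : Fin p → K), ∀ eq ∈ [NEqn.one s.n],
          NEqn.Holds (fun i => MvPolynomial.aeval x (Function.update s.val s.n 1 i)) eq := by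
        intro K _ x eq h; simp only [List.mem_singleton] at h; subst h
        show MvPolynomial.aeval x (Function.update s.val s.n 1 s.n) = 1
        rw [Function.update_self, map_one]
      have hdet : ∀ (K : Type) [CommRing K] (y : ℕ → K),
          (∀ eq ∈ s.eqs, NEqn.Holds y eq) → (∀ eq ∈ [NEqn.one s.n], NEqn.Holds y eq) →
          (∀ i < s.n, y i = MvPolynomial.aeval (fun j : Fin p => y j) (s.val i)) →
          y s.n = MvPolynomial.aeval (fun j : Fin p => y j) (1 : MvPolynomial (Fin p) ℤ) := by
        intro K _ y _ hes _
        have := hes _ (List.mem_singleton.mpr rfl)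
        rw [map_one]; exact this
      obtain ⟨h1, h2⟩ := push_spec hs 1 [NEqn.one s.n] hb hsound hdet
      exact ⟨h1, h2, Nat.lt_succ_self _, Function.update_self _ _ _⟩
  | add a b iha ihb =>
      intro s hs
      obtain ⟨ha1, ea1, o1lt, o1val⟩ := iha s hs
      obtain ⟨hb1, eb1, o2lt, o2val⟩ := ihb _ ha1
      set s1 := (compile a s).1 with hs1
      set o1 := (compile a s).2 with ho1
      set s2 := (compile b s1).1 with hs2
      set o2 := (compile b s1).2 with ho2
      have o1lt2 : o1 < s2.n := lt_of_lt_of_le o1lt eb1.le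
      have v1 : s2.val o1 = a.toPoly := by rw [eb1.val o1 o1lt, o1val]
      have hb : ∀ eq ∈ [NEqn.add o1 o2 s2.n], NEqn.Bound (s2.n + 1) eq := by
        intro eq h; simp only [List.mem_singleton] at h; subst h
        exact ⟨Nat.lt_succ_of_lt o1lt2, Nat.lt_succ_of_lt o2lt, Nat.lt_succ_self _⟩
      have hsound : ∀ (K : Type) [CommRing K] (x : Fin p → K),
          ∀ eq ∈ [NEqn.add o1 o2 s2.n],
          NEqn.Holds (fun i => MvPolynomial.aeval x
            (Function.update s2.val s2.n (a.toPoly + b.toPoly) i)) eq := by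
        intro K _ x eq h; simp only [List.mem_singleton] at h; subst h
        show MvPolynomial.aeval x _ + MvPolynomial.aeval x _ = MvPolynomial.aeval x _
        rw [Function.update_of_ne (Nat.ne_of_lt o1lt2), Function.update_of_ne (Nat.ne_of_lt o2lt),
          Function.update_self, v1, o2val, map_add]
      have hdet : ∀ (K : Type) [CommRing K] (y : ℕ → K),
          (∀ eq ∈ s2.eqs, NEqn.Holds y eq) → (∀ eq ∈ [NEqn.add o1 o2 s2.n], NEqn.Holds y eq) →
          (∀ i < s2.n, y i = MvPolynomial.aeval (fun j : Fin p => y j) (s2.val i)) →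
          y s2.n = MvPolynomial.aeval (fun j : Fin p => y j) (a.toPoly + b.toPoly) := by
        intro K _ y _ hes hprev
        have h := hes _ (List.mem_singleton.mpr rfl)
        have h1 := hprev o1 o1lt2
        have h2 := hprev o2 o2lt
        rw [v1] at h1; rw [o2val] at h2
        rw [map_add, ← h1, ← h2]
        exact h.symm
      obtain ⟨h1, h2⟩ := push_spec hb1 (a.toPoly + b.toPoly) [NEqn.add o1 o2 s2.n] hb hsound hdet
      exact ⟨h1, (ea1.trans eb1).trans h2, Nat.lt_succ_self _, Function.update_self _ _ _⟩
  | mul a b iha ihb =>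
      intro s hs
      obtain ⟨ha1, ea1, o1lt, o1val⟩ := iha s hs
      obtain ⟨hb1, eb1, o2lt, o2val⟩ := ihb _ ha1
      set s1 := (compile a s).1 with hs1
      set o1 := (compile a s).2 with ho1
      set s2 := (compile b s1).1 with hs2
      set o2 := (compile b s1).2 with ho2
      have o1lt2 : o1 < s2.n := lt_of_lt_of_le o1lt eb1.le
      have v1 : s2.val o1 = a.toPoly := by rw [eb1.val o1 o1lt, o1val]
      have hb : ∀ eq ∈ [NEqn.mul o1 o2 s2.n], NEqn.Bound (s2.n + 1) eq := by
        intro eq h; simp only [List.mem_singleton] at h; subst h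
        exact ⟨Nat.lt_succ_of_lt o1lt2, Nat.lt_succ_of_lt o2lt, Nat.lt_succ_self _⟩
      have hsound : ∀ (K : Type) [CommRing K] (x : Fin p → K),
          ∀ eq ∈ [NEqn.mul o1 o2 s2.n],
          NEqn.Holds (fun i => MvPolynomial.aeval x
            (Function.update s2.val s2.n (a.toPoly * b.toPoly) i)) eq := by
        intro K _ x eq h; simp only [List.mem_singleton] at h; subst h
        show MvPolynomial.aeval x _ * MvPolynomial.aeval x _ = MvPolynomial.aeval x _
        rw [Function.update_of_ne (Nat.ne_of_lt o1lt2), Function.update_of_ne (Nat.ne_of_lt o2lt),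
          Function.update_self, v1, o2val, map_mul]
      have hdet : ∀ (K : Type) [CommRing K] (y : ℕ → K),
          (∀ eq ∈ s2.eqs, NEqn.Holds y eq) → (∀ eq ∈ [NEqn.mul o1 o2 s2.n], NEqn.Holds y eq) →
          (∀ i < s2.n, y i = MvPolynomial.aeval (fun j : Fin p => y j) (s2.val i)) →
          y s2.n = MvPolynomial.aeval (fun j : Fin p => y j) (a.toPoly * b.toPoly) := by
        intro K _ y _ hes hprev
        have h := hes _ (List.mem_singleton.mpr rfl)
        have h1 := hprev o1 o1lt2
        have h2 := hprev o2 o2lt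
        rw [v1] at h1; rw [o2val] at h2
        rw [map_mul, ← h1, ← h2]
        exact h.symm
      obtain ⟨h1, h2⟩ := push_spec hb1 (a.toPoly * b.toPoly) [NEqn.mul o1 o2 s2.n] hb hsound hdet
      exact ⟨h1, (ea1.trans eb1).trans h2, Nat.lt_succ_self _, Function.update_self _ _ _⟩
  | neg a iha =>
      intro s hs
      obtain ⟨ha1, ea1, o1lt, o1val⟩ := iha s hs
      set s1 := (compile a s).1 with hs1
      set o1 := (compile a s).2 with ho1
      -- first push: the zero variable z = s1.n
      have hbz : ∀ eq ∈ [NEqn.add s1.n s1.n s1.n], NEqn.Bound (s1.n + 1) eq := by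
        intro eq h; simp only [List.mem_singleton] at h; subst h
        exact ⟨Nat.lt_succ_self _, Nat.lt_succ_self _, Nat.lt_succ_self _⟩
      have hsoundz : ∀ (K : Type) [CommRing K] (x : Fin p → K),
          ∀ eq ∈ [NEqn.add s1.n s1.n s1.n],
          NEqn.Holds (fun i => MvPolynomial.aeval x
            (Function.update s1.val s1.n (0 : MvPolynomial (Fin p) ℤ) i)) eq := by
        intro K _ x eq h; simp only [List.mem_singleton] at h; subst h
        show MvPolynomial.aeval x _ + MvPolynomial.aeval x _ = MvPolynomial.aeval x _
        rw [Function.update_self, map_zero, add_zero]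
      have hdetz : ∀ (K : Type) [CommRing K] (y : ℕ → K),
          (∀ eq ∈ s1.eqs, NEqn.Holds y eq) →
          (∀ eq ∈ [NEqn.add s1.n s1.n s1.n], NEqn.Holds y eq) →
          (∀ i < s1.n, y i = MvPolynomial.aeval (fun j : Fin p => y j) (s1.val i)) →
          y s1.n = MvPolynomial.aeval (fun j : Fin p => y j) (0 : MvPolynomial (Fin p) ℤ) := by
        intro K _ y _ hes _
        have h := hes _ (List.mem_singleton.mpr rfl)
        rw [map_zero]
        exact add_eq_left.mp h
      obtain ⟨hz1, ez1⟩ := push_spec ha1 0 [NEqn.add s1.n s1.n s1.n] hbz hsoundz hdetz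
      set s2 := s1.push (0 : MvPolynomial (Fin p) ℤ) [NEqn.add s1.n s1.n s1.n] with hs2def
      have hn2 : s2.n = s1.n + 1 := rfl
      have o1lt2 : o1 < s2.n := lt_of_lt_of_le o1lt ez1.le
      have v1 : s2.val o1 = a.toPoly := by rw [ez1.val o1 o1lt, o1val]
      have vz : s2.val s1.n = 0 := Function.update_self _ _ _
      have zlt2 : s1.n < s2.n := Nat.lt_succ_self _
      -- second push: the output variable k = s2.n with equation o1 + k = z
      have hbk : ∀ eq ∈ [NEqn.add o1 s2.n s1.n], NEqn.Bound (s2.n + 1) eq := by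
        intro eq h; simp only [List.mem_singleton] at h; subst h
        exact ⟨Nat.lt_succ_of_lt o1lt2, Nat.lt_succ_self _, Nat.lt_succ_of_lt zlt2⟩
      have hsoundk : ∀ (K : Type) [CommRing K] (x : Fin p → K),
          ∀ eq ∈ [NEqn.add o1 s2.n s1.n],
          NEqn.Holds (fun i => MvPolynomial.aeval x
            (Function.update s2.val s2.n (-a.toPoly) i)) eq := by
        intro K _ x eq h; simp only [List.mem_singleton] at h; subst h
        show MvPolynomial.aeval x _ + MvPolynomial.aeval x _ = MvPolynomial.aeval x _
        rw [Function.update_of_ne (Nat.ne_of_lt o1lt2), Function.update_self,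
          Function.update_of_ne (Nat.ne_of_lt zlt2), v1, vz, map_neg, map_zero, add_neg_cancel]
      have hdetk : ∀ (K : Type) [CommRing K] (y : ℕ → K),
          (∀ eq ∈ s2.eqs, NEqn.Holds y eq) →
          (∀ eq ∈ [NEqn.add o1 s2.n s1.n], NEqn.Holds y eq) →
          (∀ i < s2.n, y i = MvPolynomial.aeval (fun j : Fin p => y j) (s2.val i)) →
          y s2.n = MvPolynomial.aeval (fun j : Fin p => y j) (-a.toPoly) := by
        intro K _ y _ hes hprev
        have h := hes _ (List.mem_singleton.mpr rfl)
        have h1 := hprev o1 o1lt2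
        have hzv := hprev s1.n zlt2
        rw [v1] at h1
        rw [vz, map_zero] at hzv
        have h' : y o1 + y s2.n = y s1.n := h
        rw [map_neg, ← h1]
        rw [hzv] at h'
        linear_combination h'
      obtain ⟨hk1, ek1⟩ := push_spec hz1 (-a.toPoly) [NEqn.add o1 s2.n s1.n] hbk hsoundk hdetk
      exact ⟨hk1, (ea1.trans ez1).trans ek1, Nat.lt_succ_self _, Function.update_self _ _ _⟩

end Stmt9

theorem stmt_9 (p : ℕ) (D : MvPolynomial (Fin p) ℤ) :
    ∃ (n : ℕ) (hpn : p ≤ n) (S : List (Eqn n)),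
      ∀ (K : Type) [CommRing K] [CharZero K],
        ∃ e : {y : Fin n → K // ∀ eq ∈ S, eq.Holds y} ≃
              {x : Fin p → K // MvPolynomial.aeval x D = 0},
          ∀ y, (e y : Fin p → K) = fun i => (y : Fin n → K) (Fin.castLE hpn i) := by
  classical
  open Stmt9 in
  obtain ⟨ex, he⟩ := Stmt9.Expr.exists_toPoly_eq D
  set s0 : Stmt9.St p :=
    ⟨p, [], fun i => if h : i < p then MvPolynomial.X ⟨i, h⟩ else 0⟩ with hs0
  have hs0inv : Stmt9.Inv s0 := by
    refine ⟨le_rfl, by simp [hs0], ?_, by simp [hs0], ?_⟩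
    · intro i h
      show (if h' : i < p then MvPolynomial.X (⟨i, h'⟩ : Fin p) else 0) = _
      rw [dif_pos h]
    · intro K _ y _ i hi
      show y i = MvPolynomial.aeval (fun j : Fin p => y j)
        (if h' : i < p then MvPolynomial.X (⟨i, h'⟩ : Fin p) else 0)
      rw [dif_pos hi, MvPolynomial.aeval_X]
  obtain ⟨hinv, hext, holt, hoval⟩ := Stmt9.compile_spec ex s0 hs0inv
  set s := (Stmt9.compile ex s0).1 with hsdef
  set o := (Stmt9.compile ex s0).2 with hodef
  have hball : ∀ ne ∈ (Stmt9.NEqn.add o o o :: s.eqs), ne.Bound s.n := by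
    intro ne hne
    rcases List.mem_cons.mp hne with h | h
    · subst h; exact ⟨holt, holt, holt⟩
    · exact hinv.bound ne h
  refine ⟨s.n, hinv.le,
    (Stmt9.NEqn.add o o o :: s.eqs).pmap (fun ne h => ne.toEqn s.n h) hball, ?_⟩
  intro K _ _
  have key : ∀ y : Fin s.n → K,
      (∀ eq ∈ (Stmt9.NEqn.add o o o :: s.eqs).pmap (fun ne h => ne.toEqn s.n h) hball,
        eq.Holds y) ↔
      ∀ ne ∈ (Stmt9.NEqn.add o o o :: s.eqs),
        ne.Holds (fun i => if h : i < s.n then y ⟨i, h⟩ else 0) := by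
    intro y
    constructor
    · intro hS ne hne
      exact (Stmt9.NEqn.toEqn_holds y (hball ne hne)).mp
        (hS _ (List.mem_pmap.mpr ⟨ne, hne, rfl⟩))
    · intro hN eq heq
      obtain ⟨ne, hne, rfl⟩ := List.mem_pmap.mp heq
      exact (Stmt9.NEqn.toEqn_holds y (hball ne hne)).mpr (hN ne hne)
  refine ⟨⟨fun y => ⟨fun i => y.1 (Fin.castLE hinv.le i), ?_⟩,
           fun x => ⟨fun i => MvPolynomial.aeval x.1 (s.val i.1), ?_⟩, ?_, ?_⟩,
    fun y => rfl⟩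
  · -- toFun : the projection satisfies D = 0
    have hN := (key y.1).mp y.2
    set y' : ℕ → K := fun i => if h : i < s.n then y.1 ⟨i, h⟩ else 0 with hy'
    have h0 : y' o = 0 := add_eq_left.mp (hN _ List.mem_cons_self)
    have hd := hinv.det K y' (fun ne h => hN ne (List.mem_cons_of_mem _ h)) o holt
    rw [hoval, he] at hd
    have hx : (fun j : Fin p => y' j.1) = fun i => y.1 (Fin.castLE hinv.le i) := by
      funext j
      simp only [hy']
      rw [dif_pos (lt_of_lt_of_le j.isLt hinv.le)]
      rfl
    rw [hx] at hd
    rw [← hd]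
    exact h0
  · -- invFun : the canonical extension satisfies all equations
    refine (key _).mpr ?_
    intro ne hne
    have hcong : ∀ i < s.n,
        (if h : i < s.n then MvPolynomial.aeval x.1 (s.val ((⟨i, h⟩ : Fin s.n) : ℕ)) else 0)
        = MvPolynomial.aeval x.1 (s.val i) := by
      intro i hi; rw [dif_pos hi]
    rcases List.mem_cons.mp hne with h | h
    · subst h
      show (if h : o < s.n then _ else 0) + (if h : o < s.n then _ else 0)
          = (if h : o < s.n then _ else 0)
      rw [hcong o holt]
      have : MvPolynomial.aeval x.1 (s.val o) = 0 := by
        rw [hoval, he]; exact x.2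
      rw [this, add_zero]
    · exact (Stmt9.NEqn.holds_congr hcong (hinv.bound ne h)).mpr (hinv.sound K x.1 ne h)
  · -- left inverse
    intro y
    apply Subtype.ext
    funext i
    have hN := (key y.1).mp y.2
    set y' : ℕ → K := fun i => if h : i < s.n then y.1 ⟨i, h⟩ else 0 with hy'
    have hd := hinv.det K y' (fun ne h => hN ne (List.mem_cons_of_mem _ h)) i.1 i.2
    have hx : (fun j : Fin p => y' j.1) = fun j => y.1 (Fin.castLE hinv.le j) := by
      funext j
      simp only [hy']
      rw [dif_pos (lt_of_lt_of_le j.isLt hinv.le)]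
      rfl
    rw [hx] at hd
    show MvPolynomial.aeval (fun j => y.1 (Fin.castLE hinv.le j)) (s.val i.1) = y.1 i
    rw [← hd]
    simp only [hy']
    rw [dif_pos i.isLt]
  · -- right inverse
    intro x
    apply Subtype.ext
    funext i
    show MvPolynomial.aeval x.1 (s.val ((Fin.castLE hinv.le i) : ℕ)) = x.1 i
    rw [show ((Fin.castLE hinv.le i) : ℕ) = (i : ℕ) from rfl,
      hinv.valX i.1 i.isLt, MvPolynomial.aeval_X]
end

section
/- Suppose Ψ(x_1, x_2, x_3, ..., x_s) is a conjunction of equations of the forms x_i = 1, x_i + x_j = x_k, x_i · x_j = x_k such that for all integers x_1, x_2: (x_2 ≥ 0 and x_1 = f(x_2)) if and only if there exist integers x_3,...,x_s with Ψ(x_1,...,x_s), for some function f : ℕ → ℕ. Then for every integer n ≥ 4 + 2s there is a system S ⊆ E_n in n variables such that S has an integer solution, and every integer solution (x_1,...,x_n) of S satisfies x_1 = f(n). -/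
/-- Cast an equation to a larger index set. -/
def Eqn.castUp {s n : ℕ} (h : s ≤ n) : Eqn s → Eqn n
  | .one i => .one (i.castLE h)
  | .add i j k => .add (i.castLE h) (j.castLE h) (k.castLE h)
  | .mul i j k => .mul (i.castLE h) (j.castLE h) (k.castLE h)

lemma Eqn.castUp_holds {s n : ℕ} (h : s ≤ n) (e : Eqn s) (x : Fin n → ℤ) :
    (e.castUp h).Holds x ↔ e.Holds (fun i => x (i.castLE h)) := by
  cases e <;> simp [Eqn.castUp, Eqn.Holds]

set_option maxHeartbeats 1000000 in
theorem stmt_11 (s : ℕ) (hs : 2 ≤ s) (f : ℕ → ℕ) (Ψ : List (Eqn s))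
    (hΨ : ∀ x1 x2 : ℤ, (0 ≤ x2 ∧ x1 = (f x2.toNat : ℤ)) ↔
      ∃ y : Fin s → ℤ, y ⟨0, by omega⟩ = x1 ∧ y ⟨1, by omega⟩ = x2 ∧
        ∀ e ∈ Ψ, e.Holds y)
    (n : ℕ) (hn : 4 + 2 * s ≤ n) :
    ∃ S : List (Eqn n),
      (∃ x : Fin n → ℤ, ∀ e ∈ S, e.Holds x) ∧
      ∀ x : Fin n → ℤ, (∀ e ∈ S, e.Holds x) → x ⟨0, by omega⟩ = (f n : ℤ) := by
  have hs' : s ≤ n := by omega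
  obtain ⟨m, hm_def⟩ : ∃ m : ℕ, m = n / 2 := ⟨n / 2, rfl⟩
  have hmge : s + 2 ≤ m := by omega
  have hm : s + m + 2 ≤ n := by omega
  refine ⟨Ψ.map (Eqn.castUp hs') ++
    [Eqn.one ⟨s, by omega⟩] ++
    (List.finRange (m - 1)).map (fun i =>
       Eqn.add ⟨s + i.1, by have := i.isLt; omega⟩ ⟨s, by omega⟩
         ⟨s + i.1 + 1, by have := i.isLt; omega⟩) ++
    [Eqn.add ⟨s + (m - 1), by omega⟩ ⟨s + (m - 1), by omega⟩ ⟨s + m, by omega⟩,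
     Eqn.add ⟨s + m, by omega⟩ ⟨s + m + 1, by omega⟩ ⟨1, by omega⟩,
     if n % 2 = 0 then
       Eqn.add ⟨s + m + 1, by omega⟩ ⟨s + m + 1, by omega⟩ ⟨s + m + 1, by omega⟩
     else Eqn.one ⟨s + m + 1, by omega⟩], ?_, ?_⟩
  · -- existence of a solution
    obtain ⟨y, hy0, hy1, hyΨ⟩ := (hΨ (f n) n).mp ⟨by positivity, by simp⟩
    set xval : Fin n → ℤ := fun k =>
      if h : k.1 < s then y ⟨k.1, h⟩
      else if k.1 < s + m then (k.1 : ℤ) - s + 1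
      else if k.1 = s + m then 2 * m
      else (n : ℤ) - 2 * m with hxval
    have hv1 : ∀ (v : ℕ) (hv : v < n) (h : v < s), xval ⟨v, hv⟩ = y ⟨v, h⟩ :=
      fun v hv h => dif_pos h
    have hv2 : ∀ (v : ℕ) (hv : v < n), s ≤ v → v < s + m →
        xval ⟨v, hv⟩ = (v : ℤ) - s + 1 := by
      intro v hv h1 h2
      simp only [hxval]
      rw [dif_neg (by omega), if_pos h2]
    have hv3 : ∀ (v : ℕ) (hv : v < n), v = s + m → xval ⟨v, hv⟩ = 2 * m := by
      intro v hv h1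
      simp only [hxval]
      rw [dif_neg (by omega), if_neg (by omega), if_pos h1]
    have hv4 : ∀ (v : ℕ) (hv : v < n), s + m < v → xval ⟨v, hv⟩ = (n : ℤ) - 2 * m := by
      intro v hv h1
      simp only [hxval]
      rw [dif_neg (by omega), if_neg (by omega), if_neg (by omega)]
    refine ⟨xval, ?_⟩
    intro e he
    simp only [List.append_assoc, List.mem_append, List.mem_map, List.mem_cons,
      List.mem_singleton, List.not_mem_nil, or_false] at he
    rcases he with (⟨e', he', rfl⟩ | he)
    · rw [Eqn.castUp_holds]
      have hfun : (fun i : Fin s => xval (i.castLE hs')) = y := by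
        funext i
        exact hv1 i.1 (by omega) i.isLt
      rw [hfun]
      exact hyΨ e' he'
    rcases he with (rfl | he)
    · show xval _ = 1
      rw [hv2 s (by omega) (by omega) (by omega)]
      ring
    rcases he with (⟨i, -, rfl⟩ | he)
    · have hi := i.isLt
      show xval _ + xval _ = xval _
      rw [hv2 (s + i.1) (by omega) (by omega) (by omega),
          hv2 s (by omega) (by omega) (by omega),
          hv2 (s + i.1 + 1) (by omega) (by omega) (by omega)]
      push_cast; ring
    rcases he with (rfl | he)
    · show xval _ + xval _ = xval _
      rw [hv2 (s + (m - 1)) (by omega) (by omega) (by omega),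
          hv3 (s + m) (by omega) rfl]
      have : ((s + (m - 1) : ℕ) : ℤ) = (s : ℤ) + m - 1 := by omega
      rw [this]; ring
    rcases he with (rfl | he)
    · show xval _ + xval _ = xval _
      rw [hv3 (s + m) (by omega) rfl, hv4 (s + m + 1) (by omega) (by omega),
          hv1 1 (by omega) (by omega)]
      have : y ⟨1, by omega⟩ = (n : ℤ) := hy1
      rw [this]; ring
    · by_cases hpar : n % 2 = 0
      · rw [if_pos hpar] at he
        subst he
        show xval _ + xval _ = xval _
        rw [hv4 (s + m + 1) (by omega) (by omega)]
        have : (n : ℤ) - 2 * m = 0 := by omega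
        rw [this]; ring
      · rw [if_neg hpar] at he
        subst he
        show xval _ = 1
        rw [hv4 (s + m + 1) (by omega) (by omega)]
        omega
  · -- every solution has x 0 = f n
    intro x hx
    have hmem : ∀ e, (e ∈ Ψ.map (Eqn.castUp hs') ∨ e = Eqn.one ⟨s, by omega⟩ ∨
        (∃ i : Fin (m - 1), e = Eqn.add ⟨s + i.1, by have := i.isLt; omega⟩ ⟨s, by omega⟩
          ⟨s + i.1 + 1, by have := i.isLt; omega⟩) ∨
        e = Eqn.add ⟨s + (m - 1), by omega⟩ ⟨s + (m - 1), by omega⟩ ⟨s + m, by omega⟩ ∨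
        e = Eqn.add ⟨s + m, by omega⟩ ⟨s + m + 1, by omega⟩ ⟨1, by omega⟩ ∨
        e = (if n % 2 = 0 then
          Eqn.add ⟨s + m + 1, by omega⟩ ⟨s + m + 1, by omega⟩ ⟨s + m + 1, by omega⟩
        else Eqn.one ⟨s + m + 1, by omega⟩)) → Eqn.Holds x e := by
      intro e he
      apply hx
      simp only [List.append_assoc, List.mem_append, List.mem_map, List.mem_cons,
        List.mem_singleton, List.not_mem_nil, or_false]
      rcases he with h | h | ⟨i, h⟩ | h | h | h
      · exact Or.inl (by simpa using h)
      · exact Or.inr (Or.inl h)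
      · exact Or.inr (Or.inr (Or.inl ⟨i, List.mem_finRange i, h.symm⟩))
      · exact Or.inr (Or.inr (Or.inr (Or.inl h)))
      · exact Or.inr (Or.inr (Or.inr (Or.inr (Or.inl h))))
      · exact Or.inr (Or.inr (Or.inr (Or.inr (Or.inr h))))
    have h1 : x ⟨s, by omega⟩ = 1 := hmem _ (Or.inr (Or.inl rfl))
    have hchain : ∀ i (hi : i < m - 1),
        x ⟨s + i, by omega⟩ + x ⟨s, by omega⟩ = x ⟨s + i + 1, by omega⟩ := by
      intro i hi
      exact hmem _ (Or.inr (Or.inr (Or.inl ⟨⟨i, hi⟩, rfl⟩)))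
    have hval : ∀ i (hi : i < m), x ⟨s + i, by omega⟩ = (i : ℤ) + 1 := by
      intro i
      induction i with
      | zero => intro _; simpa using h1
      | succ i ih =>
        intro hi
        have h := hchain i (by omega)
        rw [ih (by omega), h1] at h
        have heq : x ⟨s + (i + 1), by omega⟩ = x ⟨s + i + 1, by omega⟩ := rfl
        rw [heq, ← h]
        push_cast; ring
    have htop : x ⟨s + (m - 1), by omega⟩ = (m : ℤ) := by
      have h := hval (m - 1) (by omega)
      rw [h]
      omega
    have hdouble : x ⟨s + (m - 1), by omega⟩ + x ⟨s + (m - 1), by omega⟩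
        = x ⟨s + m, by omega⟩ := hmem _ (Or.inr (Or.inr (Or.inr (Or.inl rfl))))
    have hw : x ⟨s + m, by omega⟩ = 2 * (m : ℤ) := by
      rw [← hdouble, htop]; ring
    have hpar : x ⟨s + m + 1, by omega⟩ = (n : ℤ) - 2 * m := by
      have h := hmem _ (Or.inr (Or.inr (Or.inr (Or.inr (Or.inr rfl)))))
      by_cases hp : n % 2 = 0
      · rw [if_pos hp] at h
        have h' : x ⟨s + m + 1, by omega⟩ + x ⟨s + m + 1, by omega⟩
            = x ⟨s + m + 1, by omega⟩ := h
        omega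
      · rw [if_neg hp] at h
        have h' : x ⟨s + m + 1, by omega⟩ = 1 := h
        omega
    have hsum : x ⟨s + m, by omega⟩ + x ⟨s + m + 1, by omega⟩ = x ⟨1, by omega⟩ :=
      hmem _ (Or.inr (Or.inr (Or.inr (Or.inr (Or.inl rfl)))))
    have hx2 : x ⟨1, by omega⟩ = (n : ℤ) := by
      linarith [hsum, hw, hpar]
    have key := (hΨ (x ⟨0, by omega⟩) (n : ℤ)).mpr
      ⟨fun i => x (i.castLE hs'), rfl, hx2, fun e he => by
        rw [← Eqn.castUp_holds hs']
        exact hmem _ (Or.inl (List.mem_map_of_mem (f := Eqn.castUp hs') he))⟩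
    obtain ⟨-, h0⟩ := key
    simpa using h0
end
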